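/- Let the marginal distributions be F_j = U[0, b_j] (uniform on [0, b_j]) with b_j > 0 for j = 1,...,n. Then a single price is max-min optimal: there exist an item j and a finite price x such that the pricing p with p_j = x and p_i = ∞ for all i ≠ j satisfies R(p) = R*. -/

import Mathlib

open MeasureTheory
open scoped ENNReal NNReal

noncomputable section

/-- A buyer's purchase rule for `n` items: given a valuation profile and a vector of item prices
(in `[0,∞]`), `choose` returns the purchased item (or `none` if nothing is purchased).
The axioms say: a purchased item has a finite price and yields nonnegative utility
(`feasible`), the purchased item maximizes utility among all items (`optimal`), and the buyer
does purchase whenever some item yields nonnegative utility (`active`). Ties among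
utility-maximizing items are broken according to the (fixed) rule embodied by `choose`. -/
structure BuyerRule (n : ℕ) where
  choose : (Fin n → ℝ) → (Fin n → ℝ≥0∞) → Option (Fin n)
  feasible : ∀ v p j, choose v p = some j → p j ≠ ⊤ ∧ (p j).toReal ≤ v j
  optimal : ∀ v p j k, choose v p = some j → p k ≠ ⊤ →
      v k - (p k).toReal ≤ v j - (p j).toReal
  active : ∀ v p, (∃ k, p k ≠ ⊤ ∧ (p k).toReal ≤ v k) → (choose v p).isSome = true

/-- The seller's revenue from valuation profile `v` under pricing `p`. -/
def BuyerRule.revenue {n : ℕ} (B : BuyerRule n) (p : Fin n → ℝ≥0∞) (v : Fin n → ℝ) : ℝ≥0∞ :=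
  (B.choose v p).elim 0 (fun j => p j)

/-- A joint distribution `F` on valuation profiles is compatible with the marginals `marg`
if it is a probability measure whose `j`-th one-dimensional marginal is `marg j` for every `j`. -/
def Compatible {n : ℕ} (marg : Fin n → Measure ℝ) (F : Measure (Fin n → ℝ)) : Prop :=
  IsProbabilityMeasure F ∧ ∀ j, F.map (fun v => v j) = marg j

/-- `R(p,F)`: the expected revenue of pricing `p` under joint distribution `F`. -/
def expRev {n : ℕ} (B : BuyerRule n) (p : Fin n → ℝ≥0∞) (F : Measure (Fin n → ℝ)) : ℝ≥0∞ :=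
  ∫⁻ v, B.revenue p v ∂F

/-- `R(p)`: the robust revenue guarantee of `p`, the infimum of `R(p,F)` over compatible `F`. -/
def robustRev {n : ℕ} (B : BuyerRule n) (marg : Fin n → Measure ℝ) (p : Fin n → ℝ≥0∞) : ℝ≥0∞ :=
  ⨅ (F : Measure (Fin n → ℝ)) (_ : Compatible marg F), expRev B p F

/-- `R*`: the optimal robust revenue guarantee over all pricings. -/
def optRobust {n : ℕ} (B : BuyerRule n) (marg : Fin n → Measure ℝ) : ℝ≥0∞ :=
  ⨆ p : Fin n → ℝ≥0∞, robustRev B marg p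

/-- The uniform distribution on `[a,b]`. -/
def unif (a b : ℝ) : Measure ℝ :=
  (ENNReal.ofReal (b - a))⁻¹ • volume.restrict (Set.Icc a b)

section Auxiliary

open Set Finset intervalIntegral


lemma arith_bound {c M : ℝ} (hM : 0 < M) : c - 2 * (c ^ 2 / (2 * M)) ≤ M / 4 := by
  have hd : c ^ 2 / (2 * M) * (2 * M) = c ^ 2 := div_mul_cancel₀ _ (by positivity)
  nlinarith [sq_nonneg (2 * c - M), hd, hM]

lemma key_integral_bound {ι : Type*} (S : Finset ι) (hS : S.Nonempty)
    (b x : ι → ℝ) (M : ℝ) (hM : 0 < M)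
    (hb0 : ∀ j ∈ S, 0 < b j) (hbM : ∀ j ∈ S, b j ≤ M) (hx : ∀ j ∈ S, 0 ≤ x j) :
    ∫⁻ u in Set.Icc (0:ℝ) 1, ENNReal.ofReal
      (S.sup' hS fun j => if (∀ k ∈ S, b k * u - x k ≤ b j * u - x j) ∧ x j ≤ b j * u
        then x j else 0) ≤ ENNReal.ofReal (M / 4) := by
  classical
  set φ : ℝ → ℝ := fun u => S.sup' hS fun j => b j * u - x j with hφdef
  set ρ : ℝ → ℝ := fun u => S.sup' hS fun j =>
    if (∀ k ∈ S, b k * u - x k ≤ b j * u - x j) ∧ x j ≤ b j * u then x j else 0 with hρdef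
  show ∫⁻ u in Set.Icc (0:ℝ) 1, ENNReal.ofReal (ρ u) ≤ ENNReal.ofReal (M / 4)
  have hφle : ∀ (u : ℝ), ∀ j ∈ S, b j * u - x j ≤ φ u := by
    intro u j hj
    exact Finset.le_sup' (f := fun j => b j * u - x j) hj
  have hφcont : Continuous φ := by
    apply Continuous.finset_sup'_apply hS
    intro i _
    continuity
  have hφmono : Monotone φ := by
    intro u v huv
    apply Finset.sup'_le
    intro j hj
    refine le_trans ?_ (hφle v j hj)
    nlinarith [hb0 j hj]
  have hρnonneg : ∀ u, 0 ≤ ρ u := by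
    intro u
    obtain ⟨j0, hj0⟩ := hS
    refine le_trans ?_ (Finset.le_sup'
      (f := fun j => if (∀ k ∈ S, b k * u - x k ≤ b j * u - x j) ∧ x j ≤ b j * u then x j else 0)
      hj0)
    split_ifs with h
    · exact hx j0 hj0
    · exact le_refl 0
  have hρle : ∀ u, ρ u ≤ S.sup' hS x := by
    intro u
    apply Finset.sup'_le
    intro j hj
    split_ifs with h
    · exact Finset.le_sup' x hj
    · obtain ⟨j0, hj0⟩ := hS
      exact le_trans (hx j0 hj0) (Finset.le_sup' x hj0)

  have hρmeas : Measurable ρ := by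
    have : ρ = S.sup' hS (fun j u =>
        if (∀ k ∈ S, b k * u - x k ≤ b j * u - x j) ∧ x j ≤ b j * u then x j else 0) := by
      funext u
      rw [Finset.sup'_apply]
    rw [this]
    apply Finset.measurable_sup'
    intro j _
    apply Measurable.ite _ measurable_const measurable_const
    apply MeasurableSet.inter
    · show MeasurableSet {u : ℝ | ∀ k ∈ S, b k * u - x k ≤ b j * u - x j}
      have : {u : ℝ | ∀ k ∈ S, b k * u - x k ≤ b j * u - x j}
          = ⋂ k ∈ S, {u : ℝ | b k * u - x k ≤ b j * u - x j} := by
        ext u; simp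
      rw [this]
      exact MeasurableSet.biInter S.countable_toSet fun k _ =>
        measurableSet_le ((measurable_id.const_mul _).sub measurable_const)
          ((measurable_id.const_mul _).sub measurable_const)
    · show MeasurableSet {u : ℝ | x j ≤ b j * u}
      exact measurableSet_le measurable_const (measurable_id.const_mul _)
  have hρint : ∀ a c : ℝ, IntervalIntegrable ρ volume a c := by
    intro a c
    rw [intervalIntegrable_iff]
    apply Integrable.mono' (g := fun _ => S.sup' hS x)
      (integrableOn_const measure_Ioc_lt_top.ne)
    · exact hρmeas.aestronglyMeasurable
    · refine Filter.Eventually.of_forall fun u => ?_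
      rw [Real.norm_eq_abs, abs_of_nonneg (hρnonneg u)]
      exact hρle u
  set t0 : ℝ := S.inf' hS (fun j => x j / b j) with ht0def
  have ht0nonneg : 0 ≤ t0 := by
    apply Finset.le_inf'
    intro j hj
    exact div_nonneg (hx j hj) (hb0 j hj).le
  have hfeas : ∀ (u : ℝ), ∀ j ∈ S, x j ≤ b j * u → t0 ≤ u := by
    intro u j hj hxu
    refine le_trans (Finset.inf'_le _ hj) ?_
    rw [div_le_iff₀ (hb0 j hj)]
    linarith
  have hρzero : ∀ u, u < t0 → ρ u = 0 := by
    intro u hu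
    have h0 : ∀ j ∈ S,
        (if (∀ k ∈ S, b k * u - x k ≤ b j * u - x j) ∧ x j ≤ b j * u then x j else (0:ℝ)) = 0 := by
      intro j hj
      rw [if_neg]
      rintro ⟨-, hxu⟩
      exact absurd (hfeas u j hj hxu) (not_le.2 hu)
    calc ρ u = S.sup' hS (fun _ => (0:ℝ)) := Finset.sup'_congr hS rfl h0
    _ = 0 := Finset.sup'_const hS 0
  have hIcc : MeasureTheory.IntegrableOn ρ (Set.Icc (0:ℝ) 1) := by
    apply MeasureTheory.Integrable.mono' (g := fun _ => S.sup' hS x)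
      (MeasureTheory.integrableOn_const measure_Icc_lt_top.ne)
    · exact hρmeas.aestronglyMeasurable
    · refine Filter.Eventually.of_forall fun u => ?_
      rw [Real.norm_eq_abs, abs_of_nonneg (hρnonneg u)]
      exact hρle u
  rw [← MeasureTheory.ofReal_integral_eq_lintegral_ofReal hIcc
    (Filter.Eventually.of_forall hρnonneg)]
  apply ENNReal.ofReal_le_ofReal
  by_cases ht01 : 1 < t0
  · have : ∀ u ∈ Set.Icc (0:ℝ) 1, ρ u = (0:ℝ) := fun u hu => hρzero u (lt_of_le_of_lt hu.2 ht01)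
    rw [MeasureTheory.setIntegral_congr_fun measurableSet_Icc this]
    simp
    positivity
  push_neg at ht01
  have hφt0 : φ t0 = 0 := by
    obtain ⟨j0, hj0, hj0eq⟩ := Finset.exists_mem_eq_inf' hS (fun j => x j / b j)
    apply le_antisymm
    · apply Finset.sup'_le
      intro j hj
      have h1 : t0 ≤ x j / b j := Finset.inf'_le _ hj
      rw [le_div_iff₀ (hb0 j hj)] at h1
      nlinarith
    · have h2 : b j0 * t0 - x j0 ≤ φ t0 := hφle t0 j0 hj0
      have h3 : b j0 * t0 = x j0 := by
        rw [ht0def, hj0eq]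
        exact mul_div_cancel₀ (x j0) (hb0 j0 hj0).ne'
      linarith
  have hφ0 : ∀ u, t0 ≤ u → 0 ≤ φ u := fun u h => hφt0 ▸ hφmono h
  set c := φ 1 with hcdef
  have hc0 : 0 ≤ c := hφ0 1 ht01
  obtain ⟨jm, hjm, hjmeq⟩ := Finset.exists_mem_eq_sup' hS (fun j => b j * 1 - x j)
  have hlip : ∀ u, u ≤ 1 → c - M * (1 - u) ≤ φ u := by
    intro u hu
    have h1 : b jm * u - x jm ≤ φ u := hφle u jm hjm
    have h2 : c = b jm * 1 - x jm := hjmeq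
    nlinarith [hbM jm hjm, hb0 jm hjm]
  have hcM : c ≤ M * (1 - t0) := by
    have h1 : b jm * t0 - x jm ≤ 0 := hφt0 ▸ hφle t0 jm hjm
    have h2 : c = b jm * 1 - x jm := hjmeq
    nlinarith [hbM jm hjm, hb0 jm hjm]
  have hderiv : ∀ u ∈ Set.Ioo t0 1,
      HasDerivWithinAt (fun w => w * φ w) (ρ u + 2 * φ u) (Set.Ioi u) u := by
    intro u hu
    have hu0 : 0 ≤ u := le_trans ht0nonneg hu.1.le
    have hφu : 0 ≤ φ u := hφ0 u hu.1.le
    -- the top of the envelope at u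
    obtain ⟨ja, hja, hjaeq⟩ := Finset.exists_mem_eq_sup' hS (fun j => b j * u - x j)
    have hA : ((S.filter (fun j => b j * u - x j = φ u)).Nonempty) :=
      ⟨ja, Finset.mem_filter.2 ⟨hja, hjaeq.symm⟩⟩
    obtain ⟨js, hjsA, hjsmax⟩ := Finset.exists_max_image _ b hA
    have hjsS : js ∈ S := (Finset.mem_filter.1 hjsA).1
    have hjseq : b js * u - x js = φ u := (Finset.mem_filter.1 hjsA).2
    have hxjs : x js ≤ b js * u := by linarith
    have hρu : ρ u = x js := by
      apply le_antisymm
      · apply Finset.sup'_le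
        intro j hj
        split_ifs with h
        · have hjeq : b j * u - x j = φ u :=
            le_antisymm (hφle u j hj) (hjseq ▸ h.1 js hjsS)
          have hbj : b j ≤ b js := hjsmax j (Finset.mem_filter.2 ⟨hj, hjeq⟩)
          nlinarith
        · exact hx js hjsS
      · refine le_trans ?_ (Finset.le_sup'
          (f := fun j => if (∀ k ∈ S, b k * u - x k ≤ b j * u - x j) ∧ x j ≤ b j * u
            then x j else 0) hjsS)
        rw [if_pos ⟨fun k hk => hjseq ▸ hφle u k hk, hxjs⟩]
    -- eventually to the right, φ agrees with the line of js
    have heps : ∃ ε > 0, ∀ s, u ≤ s → s < u + ε → φ s = b js * s - x js := by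
      set εf : ι → ℝ := fun k => if b k * u - x k = φ u then 1
        else (φ u - (b k * u - x k)) / (|b k - b js| + 1) with hεf
      have hεpos : ∀ k ∈ S, 0 < εf k := by
        intro k hk
        rw [hεf]
        dsimp only
        split_ifs with h
        · norm_num
        · have : b k * u - x k < φ u := lt_of_le_of_ne (hφle u k hk) h
          have h2 : (0:ℝ) < |b k - b js| + 1 := by positivity
          exact div_pos (by linarith) h2
      refine ⟨S.inf' hS εf, (Finset.lt_inf'_iff hS).2 hεpos, ?_⟩
      intro s hs1 hs2
      apply le_antisymm
      · apply Finset.sup'_le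
        intro k hk
        by_cases hkA : b k * u - x k = φ u
        · have hbk : b k ≤ b js := hjsmax k (Finset.mem_filter.2 ⟨hk, hkA⟩)
          nlinarith
        · have hklt : b k * u - x k < φ u := lt_of_le_of_ne (hφle u k hk) hkA
          have hden : (0:ℝ) < |b k - b js| + 1 := by positivity
          have hse : s - u < (φ u - (b k * u - x k)) / (|b k - b js| + 1) := by
            have h1 : S.inf' hS εf ≤ εf k := Finset.inf'_le _ hk
            have h2 : εf k = (φ u - (b k * u - x k)) / (|b k - b js| + 1) := by
              rw [hεf]; dsimp only; rw [if_neg hkA]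
            rw [← h2]
            linarith
          rw [lt_div_iff₀ hden] at hse
          have h3 : (b k - b js) * (s - u) ≤ |b k - b js| * (s - u) :=
            mul_le_mul_of_nonneg_right (le_abs_self _) (by linarith)
          nlinarith [abs_nonneg (b k - b js)]
      · exact hφle s js hjsS
    obtain ⟨ε, hε, hεp⟩ := heps
    have hpoly : HasDerivWithinAt (fun w => w * (b js * w - x js))
        (ρ u + 2 * φ u) (Set.Ioi u) u := by
      have h1 : HasDerivAt (fun w => w * (b js * w - x js))
          (1 * (b js * u - x js) + u * (b js * 1)) u :=
        (hasDerivAt_id u).mul (((hasDerivAt_id u).const_mul (b js)).sub_const (x js))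
      have h2 : (1 : ℝ) * (b js * u - x js) + u * (b js * 1) = ρ u + 2 * φ u := by
        rw [hρu, ← hjseq]; ring
      exact (h2 ▸ h1).hasDerivWithinAt
    apply hpoly.congr_of_eventuallyEq
    · filter_upwards [Ioo_mem_nhdsGT (by linarith : u < u + ε)] with s hs
      rw [hεp s hs.1.le hs.2]
    · rw [← hjseq]
  have hφint : ∀ a c : ℝ, IntervalIntegrable φ volume a c := fun a c =>
    hφcont.intervalIntegrable a c
  have hFTC : ∫ w in t0..1, (ρ w + 2 * φ w) = 1 * φ 1 - t0 * φ t0 := by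
    apply intervalIntegral.integral_eq_sub_of_hasDeriv_right_of_le
      (f := fun w => w * φ w) (f' := fun w => ρ w + 2 * φ w) ht01
    · exact (continuous_id.mul hφcont).continuousOn
    · exact hderiv
    · exact (hρint t0 1).add ((hφint t0 1).const_mul 2)
  have hsplit : ∫ w in t0..1, ρ w = c - 2 * ∫ w in t0..1, φ w := by
    rw [intervalIntegral.integral_add (hρint t0 1) ((hφint t0 1).const_mul 2),
      intervalIntegral.integral_const_mul, hφt0] at hFTC
    linarith
  -- lower bound for the integral of φ
  set s1 : ℝ := 1 - c / M with hs1def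
  have hs1a : t0 ≤ s1 := by
    rw [hs1def, le_sub_iff_add_le, ← le_sub_iff_add_le']
    rw [div_le_iff₀ hM]
    nlinarith
  have hs1b : s1 ≤ 1 := by
    rw [hs1def]
    have : 0 ≤ c / M := div_nonneg hc0 hM.le
    linarith
  have hmx_cont : Continuous (fun w : ℝ => max (c - M * (1 - w)) 0) :=
    (continuous_const.sub (continuous_const.mul (continuous_const.sub continuous_id))).max
      continuous_const
  have hint1 : ∫ w in t0..s1, max (c - M * (1 - w)) 0 = 0 := by
    rw [intervalIntegral.integral_congr (g := fun _ => (0:ℝ)), intervalIntegral.integral_zero]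
    intro w hw
    rw [Set.uIcc_of_le hs1a] at hw
    have hw2 : w ≤ s1 := hw.2
    have : c - M * (1 - w) ≤ 0 := by
      rw [hs1def] at hw2
      have := (div_le_iff₀ hM).1 (by linarith : c / M ≤ 1 - w)
      linarith
    exact max_eq_right this
  have hint2 : ∫ w in s1..1, max (c - M * (1 - w)) 0 = c ^ 2 / (2 * M) := by
    have he : ∫ w in s1..1, max (c - M * (1 - w)) 0 = ∫ w in s1..1, (c - M * (1 - w)) := by
      apply intervalIntegral.integral_congr
      intro w hw
      rw [Set.uIcc_of_le hs1b] at hw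
      have hw1 : s1 ≤ w := hw.1
      apply max_eq_left
      rw [hs1def] at hw1
      have := (le_div_iff₀ hM).1 (by linarith : 1 - w ≤ c / M)
      linarith
    rw [he]
    have hF : ∀ w ∈ Set.uIcc s1 1, HasDerivAt (fun w : ℝ => (c - M) * w + M * w ^ 2 / 2)
        (c - M * (1 - w)) w := by
      intro w _
      have : HasDerivAt (fun w : ℝ => (c - M) * w + M * w ^ 2 / 2)
          ((c - M) * 1 + M * (2 * w ^ 1) / 2) w :=
        (((hasDerivAt_id w).const_mul (c - M)).add
          (((hasDerivAt_pow 2 w).const_mul M).div_const 2))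
      convert this using 1
      simp
      ring
    rw [intervalIntegral.integral_eq_sub_of_hasDerivAt hF
      ((continuous_const.sub (continuous_const.mul (continuous_const.sub continuous_id))).intervalIntegrable s1 1)]
    rw [hs1def]
    field_simp
    ring
  have hint3 : ∫ w in t0..1, max (c - M * (1 - w)) 0 = c ^ 2 / (2 * M) := by
    rw [← intervalIntegral.integral_add_adjacent_intervals
      (hmx_cont.intervalIntegrable t0 s1) (hmx_cont.intervalIntegrable s1 1), hint1, hint2]
    ring
  have hφlb : c ^ 2 / (2 * M) ≤ ∫ w in t0..1, φ w := by
    rw [← hint3]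
    apply intervalIntegral.integral_mono_on ht01 (hmx_cont.intervalIntegrable t0 1) (hφint t0 1)
    intro w hw
    exact max_le (hlip w hw.2) (hφ0 w hw.1)
  have hmain : ∫ w in t0..1, ρ w ≤ M / 4 := by
    rw [hsplit]
    have h1 : c - 2 * (c ^ 2 / (2 * M)) ≤ M / 4 := arith_bound hM
    linarith [hφlb]
  -- assemble the whole integral
  have hzero : ∫ w in (0:ℝ)..t0, ρ w = 0 := by
    rw [intervalIntegral.integral_of_le ht0nonneg]
    apply MeasureTheory.integral_eq_zero_of_ae
    rw [Filter.EventuallyEq, ae_iff, Measure.restrict_apply' measurableSet_Ioc]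
    refine measure_mono_null (fun w hw => ?_) (measure_singleton t0)
    simp only [Set.mem_inter_iff, Set.mem_setOf_eq, Set.mem_Ioc] at hw
    have h1 := hw.2.2
    show w ∈ ({t0} : Set ℝ)
    simp only [Set.mem_singleton_iff]
    by_contra hne
    exact hw.1 (hρzero w (lt_of_le_of_ne h1 hne))
  calc ∫ u in Set.Icc (0:ℝ) 1, ρ u = ∫ u in Set.Ioc (0:ℝ) 1, ρ u :=
        MeasureTheory.integral_Icc_eq_integral_Ioc
    _ = ∫ u in (0:ℝ)..1, ρ u := (intervalIntegral.integral_of_le (by norm_num)).symm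
    _ = (∫ w in (0:ℝ)..t0, ρ w) + ∫ w in t0..1, ρ w :=
        (intervalIntegral.integral_add_adjacent_intervals (hρint 0 t0) (hρint t0 1)).symm
    _ ≤ M / 4 := by rw [hzero]; linarith

lemma unif_zero_one : unif 0 1 = volume.restrict (Set.Icc 0 1) := by
  rw [unif]
  norm_num

lemma unif_isProb {c : ℝ} (hc : 0 < c) : IsProbabilityMeasure (unif 0 c) := by
  constructor
  rw [unif, Measure.smul_apply, Measure.restrict_apply_univ, Real.volume_Icc, smul_eq_mul,
    sub_zero]
  exact ENNReal.inv_mul_cancel (by simp [ENNReal.ofReal_eq_zero]; linarith) ENNReal.ofReal_ne_top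

lemma unif_map_mul {c : ℝ} (hc : 0 < c) : (unif 0 1).map (fun u => c * u) = unif 0 c := by
  have he : MeasurableEmbedding (fun u : ℝ => c * u) :=
    (Homeomorph.mulLeft₀ c hc.ne').measurableEmbedding
  have hpre : (fun u : ℝ => c * u) ⁻¹' (Set.Icc 0 c) = Set.Icc 0 1 := by
    ext u
    simp only [Set.mem_preimage, Set.mem_Icc]
    constructor
    · rintro ⟨h1, h2⟩
      constructor <;> nlinarith
    · rintro ⟨h1, h2⟩
      constructor <;> nlinarith
  rw [unif_zero_one, unif]
  calc (volume.restrict (Set.Icc 0 1)).map (fun u => c * u)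
      = (volume.restrict ((fun u : ℝ => c * u) ⁻¹' (Set.Icc 0 c))).map (fun u => c * u) := by
        rw [hpre]
    _ = (volume.map (fun u => c * u)).restrict (Set.Icc 0 c) :=
        (he.restrict_map volume (Set.Icc 0 c)).symm
    _ = (ENNReal.ofReal |c⁻¹| • volume).restrict (Set.Icc 0 c) := by
        rw [Real.map_volume_mul_left hc.ne']
    _ = (ENNReal.ofReal (c - 0))⁻¹ • volume.restrict (Set.Icc 0 c) := by
        rw [Measure.restrict_smul, abs_of_pos (inv_pos.2 hc), sub_zero,
          ENNReal.ofReal_inv_of_pos hc]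

end Auxiliary

/-- If the marginals are `F_j = U[0, b_j]` with `b_j > 0`, then a single price
is max-min optimal: there exist an item `j` and a finite price `x` such that the pricing with
`p j = x` and `p i = ∞` for `i ≠ j` satisfies `R(p) = R*`. -/
theorem single_price_max_min_optimal_for_standard_uniforms
    (n : ℕ) (hn : 0 < n) (B : BuyerRule n)
    (b : Fin n → ℝ) (hb : ∀ j, 0 < b j)
    (marg : Fin n → Measure ℝ) (hmarg : ∀ j, marg j = unif 0 (b j)) :
    ∃ (j : Fin n) (x : ℝ), 0 ≤ x ∧
      robustRev B marg (fun i => if i = j then ENNReal.ofReal x else ⊤) = optRobust B marg := by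
  obtain ⟨J, hJmem, hJmax⟩ := Finset.exists_max_image Finset.univ b ⟨⟨0, hn⟩, Finset.mem_univ _⟩
  set M := b J with hMdef
  have hM : 0 < M := hb J
  refine ⟨J, M / 2, by positivity, ?_⟩
  set p₀ : Fin n → ℝ≥0∞ := fun i => if i = J then ENNReal.ofReal (M / 2) else ⊤ with hp₀
  -- the comonotone coupling
  set g : ℝ → (Fin n → ℝ) := fun u j => b j * u with hgdef
  have hgmeas : Measurable g := measurable_pi_lambda _ fun j => measurable_id.const_mul (b j)
  have hprob1 : IsProbabilityMeasure (unif 0 1) := unif_isProb one_pos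
  have hcompat : Compatible marg ((unif 0 1).map g) := by
    constructor
    · exact Measure.isProbabilityMeasure_map hgmeas.aemeasurable
    · intro j
      rw [Measure.map_map (measurable_pi_apply j) hgmeas]
      have hco : (fun v : Fin n → ℝ => v j) ∘ g = fun u => b j * u := rfl
      rw [hco, unif_map_mul (hb j), hmarg j]
  -- Part A: the single price `M/2` on item `J` guarantees `M/4` against every compatible `F`
  have hval : ∀ F, Compatible marg F → expRev B p₀ F = ENNReal.ofReal (M / 4) := by
    intro F hF
    have hrev : ∀ v, B.revenue p₀ v
        = Set.indicator {v : Fin n → ℝ | M / 2 ≤ v J} (fun _ => ENNReal.ofReal (M / 2)) v := by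
      intro v
      rcases hc : B.choose v p₀ with _ | j
      · by_cases hv : M / 2 ≤ v J
        · exfalso
          have hac := B.active v p₀ ⟨J, by simp [hp₀], by
            simp only [hp₀, if_pos rfl]
            rw [ENNReal.toReal_ofReal (by positivity)]
            exact hv⟩
          rw [hc] at hac
          simp at hac
        · have hv' : v ∉ {v : Fin n → ℝ | M / 2 ≤ v J} := hv
          rw [BuyerRule.revenue, hc, Set.indicator_of_notMem hv']
          rfl
      · have hj := B.feasible v p₀ j hc
        have hjJ : j = J := by
          by_contra hne
          exact hj.1 (by simp [hp₀, hne])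
        have hpj : p₀ j = ENNReal.ofReal (M / 2) := by simp [hp₀, hjJ]
        have hv : M / 2 ≤ v J := by
          have h2 := hj.2
          rw [hpj, ENNReal.toReal_ofReal (by positivity)] at h2
          rw [← hjJ]
          exact h2
        have hv' : v ∈ {v : Fin n → ℝ | M / 2 ≤ v J} := hv
        rw [BuyerRule.revenue, hc, Set.indicator_of_mem hv']
        simpa using hpj
    have hms : MeasurableSet {v : Fin n → ℝ | M / 2 ≤ v J} :=
      measurableSet_le measurable_const (measurable_pi_apply J)
    have hFs : F {v : Fin n → ℝ | M / 2 ≤ v J}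
        = (ENNReal.ofReal M)⁻¹ * ENNReal.ofReal (M / 2) := by
      have h1 : F {v : Fin n → ℝ | M / 2 ≤ v J} = (marg J) (Set.Ici (M / 2)) := by
        rw [← hF.2 J, Measure.map_apply (measurable_pi_apply J) measurableSet_Ici]
        rfl
      rw [h1, hmarg J, unif, Measure.smul_apply, smul_eq_mul,
        Measure.restrict_apply measurableSet_Ici]
      have h2 : Set.Ici (M / 2) ∩ Set.Icc 0 (b J) = Set.Icc (M / 2) (b J) := by
        ext w
        simp only [Set.mem_inter_iff, Set.mem_Ici, Set.mem_Icc]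
        constructor
        · rintro ⟨ha, hb1, hb2⟩; exact ⟨ha, hb2⟩
        · rintro ⟨ha, hb2⟩; exact ⟨ha, by linarith, hb2⟩
      rw [h2, Real.volume_Icc, ← hMdef, sub_zero, show M - M / 2 = M / 2 by ring]
    have hMne : (ENNReal.ofReal M) ≠ 0 := by
      simp only [ne_eq, ENNReal.ofReal_eq_zero, not_le]
      exact hM
    rw [expRev, lintegral_congr hrev, lintegral_indicator hms, setLIntegral_const, hFs]
    rw [mul_comm ((ENNReal.ofReal M)⁻¹) _, ← mul_assoc,
      ← ENNReal.ofReal_mul (by positivity : (0:ℝ) ≤ M / 2),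
      show M / 2 * (M / 2) = M / 4 * M by ring,
      ENNReal.ofReal_mul (by positivity : (0:ℝ) ≤ M / 4),
      mul_assoc, ENNReal.mul_inv_cancel hMne ENNReal.ofReal_ne_top, mul_one]
  have hrob : robustRev B marg p₀ = ENNReal.ofReal (M / 4) := by
    apply le_antisymm
    · exact le_of_le_of_eq (iInf₂_le _ hcompat) (hval _ hcompat)
    · exact le_iInf₂ fun F hF => (hval F hF).ge
  -- Part B: no pricing can guarantee more than `M/4`
  have hbound : ∀ p : Fin n → ℝ≥0∞,
      expRev B p ((unif 0 1).map g) ≤ ENNReal.ofReal (M / 4) := by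
    intro p
    have h1 : expRev B p ((unif 0 1).map g) ≤ ∫⁻ u, B.revenue p (g u) ∂(unif 0 1) :=
      lintegral_map_le _ g
    refine le_trans h1 ?_
    rw [unif_zero_one]
    set S : Finset (Fin n) := Finset.univ.filter (fun j : Fin n => p j ≠ ⊤) with hSdef
    by_cases hS : S.Nonempty
    · set x : Fin n → ℝ := fun j => (p j).toReal with hxdef
      have hpoint : ∀ u : ℝ, B.revenue p (g u) ≤ ENNReal.ofReal
          (S.sup' hS fun j => if (∀ k ∈ S, b k * u - x k ≤ b j * u - x j) ∧ x j ≤ b j * u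
            then x j else 0) := by
        intro u
        rcases hc : B.choose (g u) p with _ | j
        · rw [BuyerRule.revenue, hc]
          exact zero_le
        · obtain ⟨hjfin, hjfeas⟩ := B.feasible (g u) p j hc
          have hjS : j ∈ S := Finset.mem_filter.2 ⟨Finset.mem_univ j, hjfin⟩
          have hcond : (∀ k ∈ S, b k * u - x k ≤ b j * u - x j) ∧ x j ≤ b j * u := by
            constructor
            · intro k hk
              have hkfin : p k ≠ ⊤ := (Finset.mem_filter.1 hk).2
              exact B.optimal (g u) p j k hc hkfin
            · exact hjfeas
          have hle : x j ≤ S.sup' hS fun j =>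
              if (∀ k ∈ S, b k * u - x k ≤ b j * u - x j) ∧ x j ≤ b j * u then x j else 0 := by
            refine le_trans (le_of_eq (if_pos hcond).symm) (Finset.le_sup'
              (f := fun j => if (∀ k ∈ S, b k * u - x k ≤ b j * u - x j) ∧ x j ≤ b j * u
                then x j else 0) hjS)
          calc B.revenue p (g u) = p j := by rw [BuyerRule.revenue, hc]; rfl
            _ = ENNReal.ofReal (x j) := (ENNReal.ofReal_toReal hjfin).symm
            _ ≤ _ := ENNReal.ofReal_le_ofReal hle
      calc ∫⁻ u in Set.Icc (0:ℝ) 1, B.revenue p (g u)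
          ≤ ∫⁻ u in Set.Icc (0:ℝ) 1, ENNReal.ofReal
            (S.sup' hS fun j => if (∀ k ∈ S, b k * u - x k ≤ b j * u - x j) ∧ x j ≤ b j * u
              then x j else 0) := lintegral_mono hpoint
        _ ≤ ENNReal.ofReal (M / 4) := by
            have hk := key_integral_bound S hS b x M hM
              (fun j _ => hb j) (fun j _ => hJmax j (Finset.mem_univ j))
              (fun j _ => ENNReal.toReal_nonneg)
            convert hk using 5
            congr!
    · have hall : ∀ j : Fin n, p j = ⊤ := by
        intro j
        by_contra hne
        exact hS ⟨j, Finset.mem_filter.2 ⟨Finset.mem_univ j, hne⟩⟩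
      have hzero : ∀ u : ℝ, B.revenue p (g u) = 0 := by
        intro u
        rcases hc : B.choose (g u) p with _ | j
        · rw [BuyerRule.revenue, hc]; rfl
        · exact absurd (hall j) (B.feasible (g u) p j hc).1
      simp only [hzero]
      simp
  rw [hrob]
  apply le_antisymm
  · rw [← hrob]
    exact le_iSup (robustRev B marg) p₀
  · apply iSup_le
    intro p
    exact le_trans (iInf₂_le _ hcompat) (hbound p)
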